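/- arXiv:math/0505248 — 2 statements merged into one kernel-verified Lean document; each statement's English description precedes it below -/
import Mathlib

section
/- For any integer n ≥ 1 and nonzero complex a, q, one has ∏_{j=2}^n (aq^{j-2})_{j-1} = (-a)^{binom(n,2)} q^{3·binom(n,3)} ∏_{j=2}^n (q^{2-2n+j}/a)_{j-1}, where (x)_k is the elliptic shifted factorial. -/
set_option maxHeartbeats 1000000

open Finset

/-- The modified theta function θ(x) = ∏_{j≥0} (1 - pʲx)(1 - pʲ⁺¹/x). -/
noncomputable def theta (p x : ℂ) : ℂ :=
  ∏' j : ℕ, ((1 - p ^ j * x) * (1 - p ^ (j + 1) * x⁻¹))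

/-- The elliptic shifted factorial (x)ₖ = θ(x)θ(xq)⋯θ(xq^{k-1}). -/
noncomputable def ell (p q x : ℂ) (k : ℕ) : ℂ :=
  ∏ l ∈ Finset.range k, theta p (x * q ^ l)

section Aux

lemma aux_hasProd_zero_of_exists_eq_zero {f : ℕ → ℂ} (h : ∃ i, f i = 0) : HasProd f 0 := by
  obtain ⟨i0, hi0⟩ := h
  have hev : (fun s : Finset ℕ => ∏ i ∈ s, f i) =ᶠ[Filter.atTop] (fun _ => 0) := by
    filter_upwards [Filter.eventually_ge_atTop ({i0} : Finset ℕ)] with s hs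
    exact Finset.prod_eq_zero (hs (Finset.mem_singleton_self i0)) hi0
  exact Filter.Tendsto.congr' hev.symm tendsto_const_nhds

lemma aux_multipliable_one_add {u : ℕ → ℂ} (hu : Summable fun i => ‖u i‖) :
    Multipliable (fun i => 1 + u i) := by
  by_cases hz : ∃ i, 1 + u i = 0
  · exact ⟨0, aux_hasProd_zero_of_exists_eq_zero hz⟩
  · push_neg at hz
    refine Complex.multipliable_of_summable_log ?_
    have h0 : Filter.Tendsto (fun i => ‖u i‖) Filter.atTop (nhds 0) :=
      hu.tendsto_atTop_zero
    have hev : ∀ᶠ i in Filter.atTop, ‖Complex.log (1 + u i)‖ ≤ (3/2) * ‖u i‖ := by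
      filter_upwards [h0.eventually_lt_const (by norm_num : (0:ℝ) < 1/2)] with i hi
      exact Complex.norm_log_one_add_half_le_self hi.le
    exact Summable.of_norm_bounded_eventually_nat (hu.mul_left (3/2)) hev

lemma aux_multipliableA (p w : ℂ) (hp : ‖p‖ < 1) :
    Multipliable fun i : ℕ => 1 - p ^ i * w := by
  have h : (fun i : ℕ => 1 - p ^ i * w) = fun i => 1 + (-(p ^ i * w)) := by
    funext i; ring
  rw [h]
  apply aux_multipliable_one_add
  have h2 : (fun i : ℕ => ‖-(p ^ i * w)‖) = fun i => ‖p‖ ^ i * ‖w‖ := by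
    funext i; simp [norm_mul, norm_pow]
  rw [h2]
  exact (summable_geometric_of_lt_one (norm_nonneg p) hp).mul_right ‖w‖

lemma aux_theta_eq (p z : ℂ) (hp : ‖p‖ < 1) :
    theta p z = (∏' i : ℕ, (1 - p ^ i * z)) * (∏' i : ℕ, (1 - p ^ i * (p * z⁻¹))) := by
  rw [theta, ← Multipliable.tprod_mul (aux_multipliableA p z hp) (aux_multipliableA p (p * z⁻¹) hp)]
  congr 1
  funext j
  ring

lemma aux_A_peel (p w : ℂ) (hp : ‖p‖ < 1) :
    (∏' i : ℕ, (1 - p ^ i * w)) = (1 - w) * ∏' i : ℕ, (1 - p ^ i * (p * w)) := by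
  have hm : Multipliable (fun n : ℕ => 1 - p ^ (n + 1) * w) := by
    have h := aux_multipliableA p (p * w) hp
    refine h.congr fun i => ?_
    ring
  rw [tprod_eq_zero_mul' hm, pow_zero, one_mul]
  exact congrArg _ (tprod_congr fun i => by ring)

lemma aux_theta_inv (p z : ℂ) (hp : ‖p‖ < 1) (hz : z ≠ 0) :
    theta p z⁻¹ = -z⁻¹ * theta p z := by
  have h1 : theta p z⁻¹
      = (∏' i : ℕ, (1 - p ^ i * z⁻¹)) * (∏' i : ℕ, (1 - p ^ i * (p * z))) := by
    have := aux_theta_eq p z⁻¹ hp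
    rwa [inv_inv] at this
  rw [h1, aux_theta_eq p z hp, aux_A_peel p z⁻¹ hp, aux_A_peel p z hp]
  have key : (1 : ℂ) - z⁻¹ = -z⁻¹ * (1 - z) := by
    field_simp
    ring
  rw [key]
  ring

lemma aux_prod_zpow_sum {α : Type*} {q : ℂ} (hq : q ≠ 0) (s : Finset α) (f : α → ℤ) :
    ∏ x ∈ s, q ^ f x = q ^ (∑ x ∈ s, f x) := by
  induction s using Finset.cons_induction with
  | empty => simp
  | cons a s ha ih => rw [Finset.prod_cons, Finset.sum_cons, zpow_add₀ hq, ih]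

lemma aux_sum_id (k : ℕ) : ∑ l ∈ range k, l = k.choose 2 := by
  induction k with
  | zero => simp
  | succ k ih =>
    have hc : (k + 1).choose 2 = k.choose 1 + k.choose 2 := Nat.choose_succ_succ k 1
    rw [Finset.sum_range_succ, ih, hc, Nat.choose_one_right]
    omega

lemma aux_sum_succ (m : ℕ) : ∑ i ∈ range m, (i + 1) = (m + 1).choose 2 := by
  have h := aux_sum_id (m + 1)
  rw [Finset.sum_range_succ'] at h
  simpa using h

lemma aux_sum_tri (m : ℕ) :
    ∑ i ∈ range m, ∑ l ∈ range (i + 1), (i + l) = 3 * (m + 1).choose 3 := by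
  induction m with
  | zero => decide
  | succ m ih =>
    rw [Finset.sum_range_succ, ih]

    have h1 : ∑ l ∈ range (m + 1), (m + l) = (m + 1) * m + (m + 1).choose 2 := by
      rw [Finset.sum_add_distrib, Finset.sum_const, Finset.card_range, smul_eq_mul,
        aux_sum_id]
    rw [h1]
    have h2 : (m + 2).choose 3 = (m + 1).choose 2 + (m + 1).choose 3 :=
      Nat.choose_succ_succ (m + 1) 2
    have h3 : (m + 1).choose 2 * 2 = (m + 1).choose 1 * (m + 1 - 1) :=
      Nat.choose_succ_right_eq (m + 1) 1
    rw [Nat.choose_one_right] at h3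
    simp only [Nat.add_sub_cancel] at h3
    nlinarith [h2, h3]

end Aux

/-- ∏_{j=2}^n (aq^{j-2})_{j-1} = (-a)^{C(n,2)} q^{3C(n,3)} ∏_{j=2}^n (q^{2-2n+j}/a)_{j-1}. -/
theorem ell_prod_invert (p q a : ℂ) (hp : ‖p‖ < 1)
    (hq : q ≠ 0) (ha : a ≠ 0) (n : ℕ) (hn : 1 ≤ n) :
    ∏ j ∈ Finset.Icc 2 n, ell p q (a * q ^ (j - 2)) (j - 1) =
      (-a) ^ n.choose 2 * q ^ (3 * n.choose 3) *
        ∏ j ∈ Finset.Icc 2 n,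
          ell p q (q ^ ((2 : ℤ) - 2 * (n : ℤ) + (j : ℤ)) / a) (j - 1) := by
  rcases eq_or_lt_of_le hn with h1 | hn2'
  · -- n = 1 : both products are empty
    rw [← h1]
    norm_num [show Finset.Icc 2 1 = ∅ from rfl, show Nat.choose 1 3 = 0 from rfl,
      show Nat.choose 1 2 = 0 from rfl]
  have hn2 : 2 ≤ n := hn2'
  -- reindex Icc 2 n to range (n-1)
  have icc : ∀ f : ℕ → ℂ, ∏ j ∈ Finset.Icc 2 n, f j = ∏ i ∈ range (n - 1), f (2 + i) := by
    intro f
    rw [← Finset.Ico_add_one_right_eq_Icc, Finset.prod_Ico_eq_prod_range,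
      show n + 1 - 2 = n - 1 from by omega]
  rw [icc, icc]
  -- expand LHS
  have hL : ∏ i ∈ range (n - 1), ell p q (a * q ^ (2 + i - 2)) (2 + i - 1) =
      ∏ i ∈ range (n - 1), ∏ l ∈ range (i + 1), theta p (a * q ^ (i + l)) := by
    refine Finset.prod_congr rfl fun i _ => ?_
    rw [show 2 + i - 2 = i from by omega, show 2 + i - 1 = i + 1 from by omega, ell]
    exact Finset.prod_congr rfl fun l _ => by rw [pow_add, mul_assoc]
  rw [hL]
  -- expand and invert RHS
  have hR : ∏ i ∈ range (n - 1), ell p q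
        (q ^ ((2 : ℤ) - 2 * (n : ℤ) + ((2 + i : ℕ) : ℤ)) / a) (2 + i - 1) =
      ∏ i ∈ range (n - 1), ∏ l ∈ range (i + 1),
        ((-a⁻¹ * q ^ ((i : ℤ) + (l : ℤ) + 4 - 2 * (n : ℤ))) *
          theta p (a * q ^ (2 * (n : ℤ) - 4 - (i : ℤ) - (l : ℤ)))) := by
    refine Finset.prod_congr rfl fun i _ => ?_
    rw [show 2 + i - 1 = i + 1 from by omega, ell]
    refine Finset.prod_congr rfl fun l _ => ?_
    set E : ℤ := (i : ℤ) + (l : ℤ) + 4 - 2 * (n : ℤ) with hE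
    have harg : q ^ ((2 : ℤ) - 2 * (n : ℤ) + ((2 + i : ℕ) : ℤ)) / a * q ^ l
        = (a * q ^ (-E))⁻¹ := by
      rw [mul_inv, ← zpow_neg, neg_neg]
      calc q ^ ((2 : ℤ) - 2 * (n : ℤ) + ((2 + i : ℕ) : ℤ)) / a * q ^ l
          = a⁻¹ * (q ^ ((2 : ℤ) - 2 * (n : ℤ) + ((2 + i : ℕ) : ℤ)) * q ^ (l : ℤ)) := by
            rw [zpow_natCast]; ring
        _ = a⁻¹ * q ^ ((2 : ℤ) - 2 * (n : ℤ) + ((2 + i : ℕ) : ℤ) + (l : ℤ)) := by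
            rw [← zpow_add₀ hq]
        _ = a⁻¹ * q ^ E := by
            congr 1; rw [hE]; push_cast; ring_nf
    have hz : a * q ^ (-E) ≠ 0 := mul_ne_zero ha (zpow_ne_zero _ hq)
    rw [harg, aux_theta_inv p _ hp hz]
    have h2 : -(a * q ^ (-E))⁻¹ = -a⁻¹ * q ^ E := by
      rw [mul_inv, ← zpow_neg, neg_neg]; ring
    rw [h2]
    congr 2
    rw [hE]; ring_nf
  rw [hR]
  -- split scalar and theta parts
  simp only [Finset.prod_mul_distrib]
  -- the theta part equals the LHS via the involution (i,l) ↦ (n-2-l, n-2-i)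
  have hinv : ∏ i ∈ range (n - 1), ∏ l ∈ range (i + 1),
      theta p (a * q ^ (2 * (n : ℤ) - 4 - (i : ℤ) - (l : ℤ))) =
      ∏ i ∈ range (n - 1), ∏ l ∈ range (i + 1), theta p (a * q ^ (i + l)) := by
    rw [Finset.prod_sigma', Finset.prod_sigma']
    refine Finset.prod_nbij' (fun x => ⟨n - 2 - x.2, n - 2 - x.1⟩)
      (fun x => ⟨n - 2 - x.2, n - 2 - x.1⟩) ?_ ?_ ?_ ?_ ?_
    · rintro ⟨x1, x2⟩ hx
      simp only [Finset.mem_sigma, Finset.mem_range] at hx ⊢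
      omega
    · rintro ⟨x1, x2⟩ hx
      simp only [Finset.mem_sigma, Finset.mem_range] at hx ⊢
      omega
    · rintro ⟨x1, x2⟩ hx
      simp only [Finset.mem_sigma, Finset.mem_range] at hx
      dsimp only
      rw [show n - 2 - (n - 2 - x1) = x1 from by omega,
        show n - 2 - (n - 2 - x2) = x2 from by omega]
    · rintro ⟨x1, x2⟩ hx
      simp only [Finset.mem_sigma, Finset.mem_range] at hx
      dsimp only
      rw [show n - 2 - (n - 2 - x1) = x1 from by omega,
        show n - 2 - (n - 2 - x2) = x2 from by omega]
    · rintro ⟨x1, x2⟩ hx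
      simp only [Finset.mem_sigma, Finset.mem_range] at hx
      obtain ⟨hx1, hx2⟩ := hx
      dsimp only
      have hexp : ((n - 2 - x2 + (n - 2 - x1) : ℕ) : ℤ)
          = 2 * (n : ℤ) - 4 - (x1 : ℤ) - (x2 : ℤ) := by omega
      rw [← zpow_natCast q (n - 2 - x2 + (n - 2 - x1)), hexp]
  rw [hinv]
  -- compute the scalar product
  have hconst : (∏ _i ∈ range (n - 1), ∏ _l ∈ range (_i + 1), (-a⁻¹)) =
      (-a⁻¹) ^ n.choose 2 := by
    simp only [Finset.prod_const, Finset.card_range]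
    rw [Finset.prod_pow_eq_pow_sum, aux_sum_succ, show n - 1 + 1 = n from by omega]
  have hqprod : (∏ i ∈ range (n - 1), ∏ l ∈ range (i + 1),
        q ^ ((i : ℤ) + (l : ℤ) + 4 - 2 * (n : ℤ))) =
      q ^ (∑ i ∈ range (n - 1), ∑ l ∈ range (i + 1),
        ((i : ℤ) + (l : ℤ) + 4 - 2 * (n : ℤ))) := by
    calc ∏ i ∈ range (n - 1), ∏ l ∈ range (i + 1),
          q ^ ((i : ℤ) + (l : ℤ) + 4 - 2 * (n : ℤ))
        = ∏ i ∈ range (n - 1), q ^ (∑ l ∈ range (i + 1),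
            ((i : ℤ) + (l : ℤ) + 4 - 2 * (n : ℤ))) :=
          Finset.prod_congr rfl fun i _ => aux_prod_zpow_sum hq _ _
      _ = _ := aux_prod_zpow_sum hq _ _
  rw [hconst, hqprod]
  -- compute the exponent sum
  have inner : ∀ i : ℕ, ∑ l ∈ range (i + 1), ((i : ℤ) + (l : ℤ) + 4 - 2 * (n : ℤ))
      = (∑ l ∈ range (i + 1), ((i : ℤ) + (l : ℤ))) + (4 - 2 * (n : ℤ)) * ((i : ℤ) + 1) := by
    intro i
    have hd := Finset.sum_add_distrib (s := range (i + 1))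
      (f := fun l : ℕ => (i : ℤ) + (l : ℤ)) (g := fun _ => (4 : ℤ) - 2 * (n : ℤ))
    rw [Finset.sum_const, Finset.card_range] at hd
    calc ∑ l ∈ range (i + 1), ((i : ℤ) + (l : ℤ) + 4 - 2 * (n : ℤ))
        = ∑ l ∈ range (i + 1), (((i : ℤ) + (l : ℤ)) + ((4 : ℤ) - 2 * (n : ℤ))) :=
          Finset.sum_congr rfl fun l _ => by ring
      _ = (∑ l ∈ range (i + 1), ((i : ℤ) + (l : ℤ))) + (i + 1) • ((4 : ℤ) - 2 * (n : ℤ)) := hd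
      _ = (∑ l ∈ range (i + 1), ((i : ℤ) + (l : ℤ))) + (4 - 2 * (n : ℤ)) * ((i : ℤ) + 1) := by
          rw [nsmul_eq_mul]; push_cast; ring
  have hA' : ∑ i ∈ range (n - 1), ∑ l ∈ range (i + 1), ((i : ℤ) + (l : ℤ))
      = 3 * (n.choose 3 : ℤ) := by
    have h := aux_sum_tri (n - 1)
    rw [show n - 1 + 1 = n from by omega] at h
    calc ∑ i ∈ range (n - 1), ∑ l ∈ range (i + 1), ((i : ℤ) + (l : ℤ))
        = ((∑ i ∈ range (n - 1), ∑ l ∈ range (i + 1), (i + l) : ℕ) : ℤ) := by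
          push_cast; rfl
      _ = _ := by rw [h]; push_cast; ring
  have hB' : ∑ i ∈ range (n - 1), ((i : ℤ) + 1) = (n.choose 2 : ℤ) := by
    have h := aux_sum_succ (n - 1)
    rw [show n - 1 + 1 = n from by omega] at h
    calc ∑ i ∈ range (n - 1), ((i : ℤ) + 1)
        = ((∑ i ∈ range (n - 1), (i + 1) : ℕ) : ℤ) := by push_cast; rfl
      _ = _ := by rw [h]
  have hsum : ∑ i ∈ range (n - 1), ∑ l ∈ range (i + 1),
      ((i : ℤ) + (l : ℤ) + 4 - 2 * (n : ℤ)) =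
      3 * (n.choose 3 : ℤ) + (4 - 2 * (n : ℤ)) * (n.choose 2 : ℤ) := by
    rw [Finset.sum_congr rfl fun i _ => inner i, Finset.sum_add_distrib,
      ← Finset.mul_sum, hA', hB']
  rw [hsum]
  -- final bookkeeping with the constants
  have hcn : n.choose 3 * 3 = n.choose 2 * (n - 2) := Nat.choose_succ_right_eq n 2
  have h' : (n.choose 3 : ℤ) * 3 = (n.choose 2 : ℤ) * ((n : ℤ) - 2) := by
    have h2 := congrArg (fun x : ℕ => (x : ℤ)) hcn
    push_cast [Nat.cast_sub hn2] at h2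
    linarith
  have hq1 : q ^ (3 * n.choose 3) *
      q ^ (3 * (n.choose 3 : ℤ) + (4 - 2 * (n : ℤ)) * (n.choose 2 : ℤ)) = 1 := by
    rw [← zpow_natCast q (3 * n.choose 3), ← zpow_add₀ hq]
    rw [show ((3 * n.choose 3 : ℕ) : ℤ) +
        (3 * (n.choose 3 : ℤ) + (4 - 2 * (n : ℤ)) * (n.choose 2 : ℤ)) = 0 from by
      push_cast
      linear_combination (2 : ℤ) * h']
    exact zpow_zero q
  have ha1 : (-a) ^ n.choose 2 * (-a⁻¹) ^ n.choose 2 = 1 := by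
    rw [← mul_pow, neg_mul_neg, mul_inv_cancel₀ ha, one_pow]
  calc ∏ i ∈ range (n - 1), ∏ l ∈ range (i + 1), theta p (a * q ^ (i + l))
      = ((-a) ^ n.choose 2 * (-a⁻¹) ^ n.choose 2) *
        (q ^ (3 * n.choose 3) *
          q ^ (3 * (n.choose 3 : ℤ) + (4 - 2 * (n : ℤ)) * (n.choose 2 : ℤ))) *
        ∏ i ∈ range (n - 1), ∏ l ∈ range (i + 1), theta p (a * q ^ (i + l)) := by
        rw [ha1, hq1]; ring
    _ = _ := by ring
end

section
/- The trigonometric determinant transformation holds: det_{1≤j,k≤n} ( (z_j)_{k-1} / (a_j z_j)_{k-1} ) = (-1)^{binom(n,2)} q^{binom(n,3)} · det_{1≤j,k≤n} ( z_j^{k-1} (a_j)_{k-1} / (a_j z_j)_{k-1} ), where (x)_k = ∏_{l=0}^{k-1}(1 - x q^l) is the q-shifted factorial, assuming all entries are well-defined (no vanishing denominators). -/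
open Finset

/-- The q-shifted factorial (x)ₖ = (1-x)(1-xq)⋯(1-xq^{k-1}). -/
noncomputable def qfac (q x : ℂ) (k : ℕ) : ℂ :=
  ∏ l ∈ Finset.range k, (1 - x * q ^ l)

/-- Coefficients of the expansion of (z)ₖ in terms of z^m (a)ₘ (azq^m)_{k-m}. -/
noncomputable def qcoef (q : ℂ) : ℕ → ℕ → ℂ
  | 0, 0 => 1
  | 0, _ + 1 => 0
  | k + 1, 0 => qcoef q k 0
  | k + 1, m + 1 => q ^ (m + 1) * qcoef q k (m + 1) - q ^ m * qcoef q k m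

lemma qcoef_eq_zero (q : ℂ) : ∀ k m : ℕ, k < m → qcoef q k m = 0 := by
  intro k
  induction k with
  | zero =>
    intro m hm
    match m, hm with
    | m + 1, _ => rfl
  | succ k ih =>
    intro m hm
    match m, hm with
    | m + 1, hm =>
      have h1 : k < m + 1 := by omega
      have h2 : k < m := by omega
      show q ^ (m + 1) * qcoef q k (m + 1) - q ^ m * qcoef q k m = 0
      rw [ih _ h1, ih _ h2]; ring

lemma qcoef_diag (q : ℂ) (k : ℕ) : qcoef q k k = (-1) ^ k * q ^ (k.choose 2) := by
  induction k with
  | zero => simp [qcoef]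
  | succ k ih =>
    have hrec : qcoef q (k + 1) (k + 1)
        = q ^ (k + 1) * qcoef q k (k + 1) - q ^ k * qcoef q k k := by
      match k with
      | 0 => rfl
      | k + 1 => rfl
    rw [hrec, qcoef_eq_zero q k (k + 1) (by omega), ih]
    have : (k + 1).choose 2 = k + k.choose 2 := by
      rw [Nat.choose_succ_succ, Nat.choose_one_right]
    rw [this, pow_add, pow_succ]
    ring

lemma qcoef_succ (q : ℂ) (k m : ℕ) :
    qcoef q (k + 1) m =
      q ^ m * qcoef q k m - (if m = 0 then 0 else q ^ (m - 1) * qcoef q k (m - 1)) := by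
  match m with
  | 0 => simp [qcoef]
  | m + 1 => simp [qcoef]

lemma qfac_succ' (q x : ℂ) (k : ℕ) :
    qfac q x (k + 1) = (1 - x) * qfac q (x * q) k := by
  unfold qfac
  rw [Finset.prod_range_succ']
  simp only [pow_zero, mul_one]
  rw [mul_comm]
  congr 1
  apply Finset.prod_congr rfl
  intro l _
  rw [pow_succ]
  ring

lemma qfac_succ (q x : ℂ) (k : ℕ) :
    qfac q x (k + 1) = qfac q x k * (1 - x * q ^ k) := by
  unfold qfac
  rw [Finset.prod_range_succ]

lemma qfac_add (q x : ℂ) (m j : ℕ) :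
    qfac q x (m + j) = qfac q x m * qfac q (x * q ^ m) j := by
  unfold qfac
  rw [Finset.prod_range_add]
  congr 1
  apply Finset.prod_congr rfl
  intro l _
  rw [pow_add]
  ring

/-- The key expansion: (z)ₖ = ∑ₘ c(k,m) zᵐ (a)ₘ (a z qᵐ)_{k-m}. -/
lemma qfac_expand (q a : ℂ) (k : ℕ) : ∀ z : ℂ,
    qfac q z k = ∑ m ∈ Finset.range (k + 1),
      qcoef q k m * (z ^ m * qfac q a m * qfac q (a * z * q ^ m) (k - m)) := by
  induction k with
  | zero =>
    intro z
    simp [qfac, qcoef]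
  | succ k ih =>
    intro z
    have hz : qfac q z (k + 1) = (1 - z) * qfac q (z * q) k := qfac_succ' q z k
    rw [hz, ih (z * q)]
    -- rewrite coefficients via the recurrence and split the sum
    have hsplit : ∑ m ∈ Finset.range (k + 2),
        qcoef q (k + 1) m * (z ^ m * qfac q a m * qfac q (a * z * q ^ m) (k + 1 - m))
        = (∑ m ∈ Finset.range (k + 2),
            q ^ m * qcoef q k m * (z ^ m * qfac q a m * qfac q (a * z * q ^ m) (k + 1 - m)))
          - ∑ m ∈ Finset.range (k + 2),
            (if m = 0 then 0 else q ^ (m - 1) * qcoef q k (m - 1)) *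
              (z ^ m * qfac q a m * qfac q (a * z * q ^ m) (k + 1 - m)) := by
      rw [← Finset.sum_sub_distrib]
      apply Finset.sum_congr rfl
      intro m _
      rw [qcoef_succ]
      ring
    rw [hsplit]
    -- first sum: the top term vanishes
    rw [Finset.sum_range_succ (fun m => q ^ m * qcoef q k m *
        (z ^ m * qfac q a m * qfac q (a * z * q ^ m) (k + 1 - m))),
      qcoef_eq_zero q k (k + 1) (by omega)]
    -- second sum: shift the index
    rw [Finset.sum_range_succ' (fun m =>
        (if m = 0 then 0 else q ^ (m - 1) * qcoef q k (m - 1)) *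
          (z ^ m * qfac q a m * qfac q (a * z * q ^ m) (k + 1 - m)))]
    simp only [if_true, if_pos, if_neg (Nat.succ_ne_zero _), Nat.add_sub_cancel,
      ite_true, mul_zero, zero_mul, add_zero]
    rw [Finset.mul_sum]
    rw [← Finset.sum_sub_distrib]
    apply Finset.sum_congr rfl
    intro m hm
    have hmk : m ≤ k := by
      simpa using Nat.lt_succ_iff.mp (Finset.mem_range.mp hm)
    have h1 : k + 1 - m = (k - m) + 1 := by omega
    have h2 : k + 1 - (m + 1) = k - m := by omega
    rw [h1, h2, qfac_succ' q (a * z * q ^ m) (k - m)]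
    have harg : a * z * q ^ m * q = a * z * q ^ (m + 1) := by rw [pow_succ]; ring
    rw [harg]
    have harg2 : a * (z * q) * q ^ m = a * z * q ^ (m + 1) := by rw [pow_succ]; ring
    rw [harg2]
    rw [qfac_succ q a m]
    ring

lemma sum_range_id_choose (n : ℕ) : ∑ k ∈ Finset.range n, k = n.choose 2 := by
  induction n with
  | zero => simp
  | succ n ih =>
    rw [Finset.sum_range_succ, ih, Nat.choose_succ_succ, Nat.choose_one_right, Nat.add_comm]

lemma sum_range_choose_two (n : ℕ) : ∑ k ∈ Finset.range n, k.choose 2 = n.choose 3 := by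
  induction n with
  | zero => simp
  | succ n ih =>
    rw [Finset.sum_range_succ, ih, Nat.choose_succ_succ]
    exact Nat.add_comm _ _

/-- Trigonometric determinant transformation (Rosengren–Schlosser, Eq. (7.27)):
det((z_j)_{k-1}/(a_j z_j)_{k-1}) = (-1)^{C(n,2)} q^{C(n,3)} det(z_j^{k-1}(a_j)_{k-1}/(a_j z_j)_{k-1}). -/
theorem trig_det_transform (q : ℂ) (n : ℕ) (z a : Fin n → ℂ)
    (hden : ∀ j k : Fin n, qfac q (a j * z j) (k : ℕ) ≠ 0) :
    Matrix.det (Matrix.of fun j k : Fin n =>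
        qfac q (z j) (k : ℕ) / qfac q (a j * z j) (k : ℕ)) =
      (-1) ^ n.choose 2 * q ^ n.choose 3 *
        Matrix.det (Matrix.of fun j k : Fin n =>
          (z j) ^ (k : ℕ) * qfac q (a j) (k : ℕ) / qfac q (a j * z j) (k : ℕ)) := by
  set N : Matrix (Fin n) (Fin n) ℂ := Matrix.of fun j k : Fin n =>
    (z j) ^ (k : ℕ) * qfac q (a j) (k : ℕ) / qfac q (a j * z j) (k : ℕ) with hN
  set U : Matrix (Fin n) (Fin n) ℂ := Matrix.of fun m k : Fin n => qcoef q (k : ℕ) (m : ℕ)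
    with hU
  have hMU : (Matrix.of fun j k : Fin n =>
      qfac q (z j) (k : ℕ) / qfac q (a j * z j) (k : ℕ)) = N * U := by
    ext j k
    rw [Matrix.mul_apply]
    simp only [Matrix.of_apply, hN, hU]
    rw [Fin.sum_univ_eq_sum_range (fun m =>
      z j ^ m * qfac q (a j) m / qfac q (a j * z j) m * qcoef q (k : ℕ) m)]
    have hksub : (k : ℕ) + 1 ≤ n := k.isLt
    rw [← Finset.sum_subset (Finset.range_subset_range.mpr hksub) (by
      intro m _ hm
      have : (k : ℕ) < m := by
        simp only [Finset.mem_range, not_lt] at hm ⊢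
        omega
      rw [qcoef_eq_zero q _ _ this, mul_zero])]
    rw [qfac_expand q (a j) (k : ℕ) (z j)]
    rw [Finset.sum_div]
    apply Finset.sum_congr rfl
    intro m hm
    have hmk : m ≤ (k : ℕ) := Nat.lt_succ_iff.mp (Finset.mem_range.mp hm)
    have hmn : m < n := lt_of_le_of_lt hmk k.isLt
    have hfac : qfac q (a j * z j) (k : ℕ)
        = qfac q (a j * z j) m * qfac q (a j * z j * q ^ m) ((k : ℕ) - m) := by
      rw [← qfac_add]
      congr 1
      omega
    have hm0 : qfac q (a j * z j) m ≠ 0 := hden j ⟨m, hmn⟩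
    have hk0 : qfac q (a j * z j) (k : ℕ) ≠ 0 := hden j k
    have ht0 : qfac q (a j * z j * q ^ m) ((k : ℕ) - m) ≠ 0 := by
      intro h
      apply hk0
      rw [hfac, h, mul_zero]
    rw [hfac]
    field_simp
  rw [hMU, Matrix.det_mul]
  have hUtri : U.BlockTriangular id := by
    intro i j hij
    simp only [id] at hij
    exact qcoef_eq_zero q _ _ hij
  rw [Matrix.det_of_upperTriangular hUtri]
  have hdiag : ∏ i : Fin n, U i i = (-1) ^ n.choose 2 * q ^ n.choose 3 := by
    have : ∀ i : Fin n, U i i = (-1) ^ (i : ℕ) * q ^ ((i : ℕ).choose 2) := by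
      intro i
      simp only [hU, Matrix.of_apply]
      exact qcoef_diag q (i : ℕ)
    rw [Finset.prod_congr rfl (fun i _ => this i)]
    rw [Finset.prod_mul_distrib]
    rw [Finset.prod_pow_eq_pow_sum, Finset.prod_pow_eq_pow_sum]
    rw [Fin.sum_univ_eq_sum_range (fun i => i), Fin.sum_univ_eq_sum_range (fun i => i.choose 2)]
    rw [sum_range_id_choose, sum_range_choose_two]
  rw [hdiag]
  ring
end
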